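/- arXiv:2104.13651 — 3 statements merged into one kernel-verified Lean document; each statement's English description precedes it below -/
import Mathlib

section
/- The AGL_1(ℂ)-representation variety of the (m,n)-torus knot is isomorphic to the set {(t, α, β) ∈ ℂ* × ℂ² : Φ_n(t^m)·α = Φ_m(t^n)·β}, via sending (t,α,β) to the pair of affine maps (x ↦ t^m x + α, x ↦ t^n x + β). -/
/-- The affine automorphism `x ↦ a • x + α` of `ℂ`. -/
noncomputable def affMap (a : ℂˣ) (α : ℂ) : ℂ ≃ᵃ[ℂ] ℂ :=
  (LinearEquiv.smulOfUnit a).toAffineEquiv.trans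
    (AffineEquiv.constVAdd ℂ ℂ α)

lemma affMap_apply (a : ℂˣ) (α x : ℂ) : affMap a α x = α + a * x := rfl

lemma affMap_mul (a b : ℂˣ) (α β : ℂ) :
    affMap a α * affMap b β = affMap (a * b) (α + a * β) := by
  ext x
  show affMap a α (affMap b β x) = _
  simp [affMap_apply]; ring

lemma affMap_one : affMap 1 0 = 1 := by
  ext x; show affMap 1 0 x = x; simp [affMap_apply]

open Finset in
lemma affMap_pow (a : ℂˣ) (α : ℂ) (k : ℕ) :
    affMap a α ^ k = affMap (a ^ k) ((∑ i ∈ range k, (a : ℂ) ^ i) * α) := by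
  induction k with
  | zero => simp [affMap_one]
  | succ k ih =>
    rw [pow_succ, ih, affMap_mul, geom_sum_succ']
    congr 1
    · rw [pow_succ]
    · push_cast; ring

lemma affMap_inj {a b : ℂˣ} {α β : ℂ} (h : affMap a α = affMap b β) :
    a = b ∧ α = β := by
  have h0 : affMap a α 0 = affMap b β 0 := by rw [h]
  have h1 : affMap a α 1 = affMap b β 1 := by rw [h]
  simp [affMap_apply] at h0 h1
  refine ⟨Units.ext ?_, h0⟩
  simpa [h0] using h1

lemma affMap_surj (e : ℂ ≃ᵃ[ℂ] ℂ) : ∃ a α, e = affMap a α := by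
  have ha : e.linear 1 ≠ 0 := by
    simp [LinearEquiv.map_eq_zero_iff]
  refine ⟨Units.mk0 (e.linear 1) ha, e 0, ?_⟩
  ext x
  have : e x = e.linear x +ᵥ e 0 := by
    simpa using e.map_vadd 0 x
  rw [this]
  have : e.linear x = x * e.linear 1 := by
    calc e.linear x = e.linear (x • 1) := by simp
    _ = x • e.linear 1 := by rw [map_smul]
    _ = x * e.linear 1 := rfl
  simp [affMap_apply, this]
  ring

lemma unit_pow_det {t s : ℂˣ} {m n : ℕ} {u v : ℤ}
    (huv : u * (m:ℤ) + v * (n:ℤ) = 1) (h1 : t ^ m = s ^ m) (h2 : t ^ n = s ^ n) :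
    t = s := by
  have key : ∀ w : ℂˣ, w = (w ^ m) ^ u * (w ^ n) ^ v := by
    intro w
    rw [← zpow_natCast w m, ← zpow_natCast w n, ← zpow_mul, ← zpow_mul, ← zpow_add,
      mul_comm (m:ℤ) u, mul_comm (n:ℤ) v, huv, zpow_one]
  rw [key t, key s, h1, h2]

open Finset in
theorem agl1_rep_variety_description (m n : ℕ) (hm : 0 < m) (hn : 0 < n)
    (h : Nat.Coprime m n) :
    ∃ F : {p : ℂˣ × ℂ × ℂ //
            (∑ i ∈ range n, ((p.1 : ℂ) ^ m) ^ i) * p.2.1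
              = (∑ i ∈ range m, ((p.1 : ℂ) ^ n) ^ i) * p.2.2} ≃
          {AB : (ℂ ≃ᵃ[ℂ] ℂ) × (ℂ ≃ᵃ[ℂ] ℂ) // AB.1 ^ n = AB.2 ^ m},
      ∀ p, (F p).val = (affMap (p.val.1 ^ m) p.val.2.1, affMap (p.val.1 ^ n) p.val.2.2) := by
  obtain ⟨u, v, huv⟩ : IsCoprime (m : ℤ) (n : ℤ) := Int.isCoprime_iff_gcd_eq_one.mpr h
  set f : {p : ℂˣ × ℂ × ℂ //
            (∑ i ∈ range n, ((p.1 : ℂ) ^ m) ^ i) * p.2.1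
              = (∑ i ∈ range m, ((p.1 : ℂ) ^ n) ^ i) * p.2.2} →
          {AB : (ℂ ≃ᵃ[ℂ] ℂ) × (ℂ ≃ᵃ[ℂ] ℂ) // AB.1 ^ n = AB.2 ^ m} := fun p =>
    ⟨(affMap (p.1.1 ^ m) p.1.2.1, affMap (p.1.1 ^ n) p.1.2.2), by
      rw [affMap_pow, affMap_pow, ← pow_mul, ← pow_mul, mul_comm m n]
      congr 1
      push_cast
      exact p.2⟩ with hf
  refine ⟨Equiv.ofBijective f ⟨?_, ?_⟩, fun p => rfl⟩
  · rintro ⟨⟨t, α, β⟩, hp⟩ ⟨⟨s, γ, δ⟩, hq⟩ hpq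
    have := congrArg Subtype.val hpq
    simp only [hf, Prod.mk.injEq] at this
    obtain ⟨e1, e2⟩ := this
    obtain ⟨em, eα⟩ := affMap_inj e1
    obtain ⟨en, eβ⟩ := affMap_inj e2
    have : t = s := unit_pow_det huv em en
    simp [this, eα, eβ]
  · rintro ⟨⟨A, B⟩, hAB⟩
    obtain ⟨a, α, rfl⟩ := affMap_surj A
    obtain ⟨b, β, rfl⟩ := affMap_surj B
    rw [affMap_pow, affMap_pow] at hAB
    obtain ⟨h1, h2⟩ := affMap_inj hAB
    set t : ℂˣ := a ^ u * b ^ v with ht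
    have hnv : u * (m:ℤ) + (n:ℤ) * v = 1 := by linarith [huv]
    have hmu : (m:ℤ) * u + v * (n:ℤ) = 1 := by linarith [huv]
    have htm : t ^ m = a := by
      have : t ^ (m:ℤ) = a := by
        rw [ht, mul_zpow, ← zpow_mul, ← zpow_mul, mul_comm v (m:ℤ), zpow_mul b (m:ℤ) v,
          zpow_natCast b m, ← h1, ← zpow_natCast a n, ← zpow_mul, ← zpow_add, hnv, zpow_one]
      rwa [zpow_natCast] at this
    have htn : t ^ n = b := by
      have : t ^ (n:ℤ) = b := by
        rw [ht, mul_zpow, ← zpow_mul, ← zpow_mul, mul_comm u (n:ℤ), zpow_mul a (n:ℤ) u,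
          zpow_natCast a n, h1, ← zpow_natCast b m, ← zpow_mul, ← zpow_add]
        rw [show (m:ℤ) * u + v * (n:ℤ) = 1 from hmu, zpow_one]
      rwa [zpow_natCast] at this
    refine ⟨⟨(t, α, β), ?_⟩, ?_⟩
    · have : ((t : ℂ) ^ m) = (a : ℂ) := by rw [← Units.val_pow_eq_pow_val, htm]
      have h' : ((t : ℂ) ^ n) = (b : ℂ) := by rw [← Units.val_pow_eq_pow_val, htn]
      rw [this, h']
      exact_mod_cast h2
    · apply Subtype.ext
      simp only [hf, htm, htn]
end

section
/- The E-polynomial (equivalently, the class in the Grothendieck ring generated by the Lefschetz motive q) of the AGL_1(ℂ)-representation variety {(t,α,β) ∈ ℂ* × ℂ² : Φ_n(t^m)α = Φ_m(t^n)β} equals (mn - m - n + 2)(q² - q); concretely, counting points over a finite field 𝔽_q containing all mn-th roots of unity, the number of solutions is (mn - m - n + 2)(q² - q). -/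
open scoped Classical in
open Finset in
private lemma agl1_fiber_card (F : Type) [Field F] [Fintype F] (a b : F) :
    Nat.card {p : F × F // a * p.1 = b * p.2}
      = if a = 0 ∧ b = 0 then Fintype.card F ^ 2 else Fintype.card F := by
  classical
  by_cases hb : b = 0
  · by_cases ha : a = 0
    · subst ha; subst hb
      rw [if_pos ⟨rfl, rfl⟩,
        Nat.card_congr (Equiv.subtypeUnivEquiv (by simp)), Nat.card_prod,
        Nat.card_eq_fintype_card]
      ring
    · rw [if_neg (fun h => ha h.1)]
      subst hb
      have e : {p : F × F // a * p.1 = 0 * p.2} ≃ F :=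
        { toFun := fun x => x.1.2
          invFun := fun β => ⟨(0, β), by simp⟩
          left_inv := fun x => by
            have := x.2
            rw [zero_mul, mul_eq_zero] at this
            exact Subtype.ext (Prod.ext ((or_iff_right ha).mp this).symm rfl)
          right_inv := fun β => rfl }
      rw [Nat.card_congr e, Nat.card_eq_fintype_card]
  · rw [if_neg (fun h => hb h.2)]
    have e : {p : F × F // a * p.1 = b * p.2} ≃ F :=
      { toFun := fun x => x.1.1
        invFun := fun α => ⟨(α, b⁻¹ * (a * α)), by field_simp⟩
        left_inv := fun x => by
          refine Subtype.ext (Prod.ext rfl ?_)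
          simp only [x.2, inv_mul_cancel_left₀ hb]
        right_inv := fun α => rfl }
    rw [Nat.card_congr e, Nat.card_eq_fintype_card]

private lemma agl1_root_count (F : Type) [Field F] [Fintype F] (k : ℕ) (hk : 0 < k)
    (hdvd : k ∣ Fintype.card F - 1) : (Polynomial.nthRootsFinset k (1 : F)).card = k := by
  classical
  have : Fintype Fˣ := Fintype.ofFinite Fˣ
  obtain ⟨g, hg⟩ := IsCyclic.exists_ofOrder_eq_natCard (α := Fˣ)
  rw [Nat.card_units, Nat.card_eq_fintype_card] at hg
  have hgp : IsPrimitiveRoot (g : F) (Fintype.card F - 1) := by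
    rw [IsPrimitiveRoot.coe_units_iff, ← hg]
    exact IsPrimitiveRoot.orderOf g
  obtain ⟨c, hc⟩ := hdvd
  have hcard : 0 < Fintype.card F - 1 := by
    have := Fintype.one_lt_card (α := F)
    omega
  have hζ : IsPrimitiveRoot ((g : F) ^ c) k := by
    refine hgp.pow hcard ?_
    rw [hc, mul_comm]
  exact hζ.card_nthRootsFinset

open Finset in
theorem agl1_point_count (m n : ℕ) (hm : 0 < m) (hn : 0 < n) (h : Nat.Coprime m n)
    (F : Type) [Field F] [Fintype F] (q : ℕ) (hq : Fintype.card F = q)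
    (hroots : q ≡ 1 [MOD m * n]) :
    (Nat.card {p : F × F × F // p.1 ≠ 0 ∧
        (∑ i ∈ range n, (p.1 ^ m) ^ i) * p.2.1
          = (∑ i ∈ range m, (p.1 ^ n) ^ i) * p.2.2} : ℤ)
      = ((m : ℤ) * n - m - n + 2) * ((q : ℤ) ^ 2 - q) := by
  classical
  have hq2 : 1 < q := hq ▸ Fintype.one_lt_card
  have hdvd : m * n ∣ q - 1 := (Nat.modEq_iff_dvd' (by omega)).mp hroots.symm
  -- m, n nonzero in F
  have hcast : ∀ k : ℕ, 0 < k → k ∣ q - 1 → (k : F) ≠ 0 := by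
    intro k hk hkd h0
    obtain ⟨c, hc⟩ := hkd
    have h1 : ((q - 1 : ℕ) : F) = 0 := by
      rw [hc]; push_cast; rw [h0]; ring
    rw [Nat.cast_sub (by omega), ← hq, FiniteField.cast_card_eq_zero] at h1
    simp at h1
  have hmd : m ∣ q - 1 := dvd_trans (Dvd.intro n rfl) hdvd
  have hnd : n ∣ q - 1 := dvd_trans (Dvd.intro_left m rfl) hdvd
  have hmF : (m : F) ≠ 0 := hcast m hm hmd
  have hnF : (n : F) ≠ 0 := hcast n hn hnd
  -- characterization of vanishing of the geometric sums
  have Azero : ∀ (a b : ℕ), 0 < b → (b : F) ≠ 0 → ∀ t : F,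
      (∑ i ∈ range b, (t ^ a) ^ i) = 0 ↔ (t ^ (a * b) = 1 ∧ t ^ a ≠ 1) := by
    intro a b hb hbF t
    by_cases hta : t ^ a = 1
    · have hs : (∑ i ∈ range b, (t ^ a) ^ i) = (b : F) := by
        simp [hta]
      rw [hs]
      simp [hta, hbF]
    · have key : (∑ i ∈ range b, (t ^ a) ^ i) * (t ^ a - 1) = t ^ (a * b) - 1 := by
        rw [geom_sum_mul, ← pow_mul]
      constructor
      · intro h0
        refine ⟨?_, hta⟩
        rw [h0, zero_mul] at key
        exact sub_eq_zero.mp key.symm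
      · rintro ⟨h1, -⟩
        rw [h1, sub_self] at key
        exact (mul_eq_zero.mp key).resolve_right (sub_ne_zero.mpr hta)
  -- decompose the count over t
  set T : F → Type := fun t => {p : F × F // t ≠ 0 ∧
      (∑ i ∈ range n, (t ^ m) ^ i) * p.1 = (∑ i ∈ range m, (t ^ n) ^ i) * p.2} with hT
  have e : {p : F × F × F // p.1 ≠ 0 ∧
        (∑ i ∈ range n, (p.1 ^ m) ^ i) * p.2.1
          = (∑ i ∈ range m, (p.1 ^ n) ^ i) * p.2.2} ≃ Σ t : F, T t :=
    { toFun := fun x => ⟨x.1.1, ⟨(x.1.2.1, x.1.2.2), x.2⟩⟩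
      invFun := fun y => ⟨(y.1, y.2.1.1, y.2.1.2), y.2.2⟩
      left_inv := fun x => rfl
      right_inv := fun y => rfl }
  have fib : ∀ t : F, Nat.card (T t)
      = if t = 0 then 0 else
          (if (∑ i ∈ range n, (t ^ m) ^ i) = 0 ∧ (∑ i ∈ range m, (t ^ n) ^ i) = 0
            then q ^ 2 else q) := by
    intro t
    by_cases ht : t = 0
    · rw [if_pos ht]
      have : IsEmpty (T t) := ⟨fun x => x.2.1 ht⟩
      simp [Nat.card_of_isEmpty]
    · rw [if_neg ht, hT]
      rw [Nat.card_congr (Equiv.subtypeEquivRight (fun p => and_iff_right ht)),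
        agl1_fiber_card, hq]
  have total : Nat.card {p : F × F × F // p.1 ≠ 0 ∧
        (∑ i ∈ range n, (p.1 ^ m) ^ i) * p.2.1
          = (∑ i ∈ range m, (p.1 ^ n) ^ i) * p.2.2}
      = ∑ t : F, (if t = 0 then 0 else
          (if (∑ i ∈ range n, (t ^ m) ^ i) = 0 ∧ (∑ i ∈ range m, (t ^ n) ^ i) = 0
            then q ^ 2 else q)) := by
    rw [Nat.card_congr e, Nat.card_eq_fintype_card, Fintype.card_sigma]
    exact Finset.sum_congr rfl fun t _ => by rw [← Nat.card_eq_fintype_card, fib t]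
  -- now compute the sum
  set C : F → Prop := fun t =>
    (∑ i ∈ range n, (t ^ m) ^ i) = 0 ∧ (∑ i ∈ range m, (t ^ n) ^ i) = 0 with hC
  set s : Finset F := Finset.univ.erase 0 with hs
  have hsum : (∑ t : F, (if t = 0 then 0 else (if C t then q ^ 2 else q)))
      = (s.filter C).card * q ^ 2 + (s.filter (fun t => ¬ C t)).card * q := by
    rw [← Finset.sum_erase_add Finset.univ _ (Finset.mem_univ (0 : F)), if_pos rfl,
      add_zero]
    rw [Finset.sum_congr rfl (fun t ht => if_neg (Finset.ne_of_mem_erase ht)),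
      Finset.sum_ite, Finset.sum_const, Finset.sum_const, smul_eq_mul, smul_eq_mul]
  have hscard : s.card = q - 1 := by
    rw [hs, Finset.card_erase_of_mem (Finset.mem_univ _), Finset.card_univ, hq]
  -- identify the bad set
  have hmn : 0 < m * n := Nat.mul_pos hm hn
  have hfilter : s.filter C
      = Polynomial.nthRootsFinset (m * n) (1 : F) \
        (Polynomial.nthRootsFinset m (1 : F) ∪ Polynomial.nthRootsFinset n (1 : F)) := by
    ext t
    simp only [Finset.mem_filter, Finset.mem_sdiff, Finset.mem_union,
      Polynomial.mem_nthRootsFinset hmn, Polynomial.mem_nthRootsFinset hm,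
      Polynomial.mem_nthRootsFinset hn, hs, Finset.mem_erase, Finset.mem_univ,
      and_true, hC]
    rw [Azero m n hn hnF t, Azero n m hm hmF t, mul_comm n m]
    constructor
    · rintro ⟨ht0, ⟨h1, h2⟩, ⟨h3, h4⟩⟩
      exact ⟨h1, fun hc => hc.elim h2 h4⟩
    · rintro ⟨h1, h2⟩
      push_neg at h2
      refine ⟨?_, ⟨h1, h2.1⟩, ⟨h1, h2.2⟩⟩
      intro ht0
      rw [ht0, zero_pow (by omega)] at h1
      exact zero_ne_one h1
  have hUsub : Polynomial.nthRootsFinset m (1 : F) ∪ Polynomial.nthRootsFinset n (1 : F)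
      ⊆ Polynomial.nthRootsFinset (m * n) (1 : F) := by
    intro t ht
    rw [Polynomial.mem_nthRootsFinset hmn]
    rcases Finset.mem_union.mp ht with ht | ht
    · rw [Polynomial.mem_nthRootsFinset hm] at ht
      rw [pow_mul, ht, one_pow]
    · rw [Polynomial.mem_nthRootsFinset hn] at ht
      rw [mul_comm, pow_mul, ht, one_pow]
  have hinter : Polynomial.nthRootsFinset m (1 : F) ∩ Polynomial.nthRootsFinset n (1 : F)
      = {(1 : F)} := by
    ext t
    simp only [Finset.mem_inter, Polynomial.mem_nthRootsFinset hm,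
      Polynomial.mem_nthRootsFinset hn, Finset.mem_singleton]
    constructor
    · rintro ⟨h1, h2⟩
      have : orderOf t ∣ Nat.gcd m n :=
        Nat.dvd_gcd (orderOf_dvd_of_pow_eq_one h1) (orderOf_dvd_of_pow_eq_one h2)
      rw [h] at this
      rw [← orderOf_eq_one_iff]
      exact Nat.dvd_one.mp this
    · rintro rfl; exact ⟨one_pow m, one_pow n⟩
  have hhq : Fintype.card F - 1 = q - 1 := by rw [hq]
  have hcardmn := agl1_root_count F (m * n) hmn (hhq ▸ hdvd)
  have hcardm := agl1_root_count F m hm (hhq ▸ hmd)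
  have hcardn := agl1_root_count F n hn (hhq ▸ hnd)
  have hunion : (Polynomial.nthRootsFinset m (1 : F) ∪ Polynomial.nthRootsFinset n (1 : F)).card
      = m + n - 1 := by
    have := Finset.card_union_add_card_inter (Polynomial.nthRootsFinset m (1 : F))
      (Polynomial.nthRootsFinset n (1 : F))
    rw [hinter, hcardm, hcardn, Finset.card_singleton] at this
    omega
  have hCcard : (s.filter C).card = m * n - (m + n - 1) := by
    rw [hfilter, Finset.card_sdiff_of_subset hUsub, hcardmn, hunion]
  have hNcard : (s.filter (fun t => ¬ C t)).card = (q - 1) - (m * n - (m + n - 1)) := by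
    have := Finset.card_filter_add_card_filter_not (s := s) (p := C)
    rw [hCcard, hscard] at this
    omega
  -- inequalities
  have hle1 : m + n - 1 ≤ m * n := by
    obtain ⟨a, rfl⟩ := Nat.exists_eq_succ_of_ne_zero hm.ne'
    obtain ⟨b, rfl⟩ := Nat.exists_eq_succ_of_ne_zero hn.ne'
    calc (a + 1) + (b + 1) - 1 = a + b + 1 := by omega
      _ ≤ a * b + (a + b + 1) := Nat.le_add_left _ _
      _ = (a + 1) * (b + 1) := by ring
  have hle2 : m * n ≤ q - 1 := Nat.le_of_dvd (by omega) hdvd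
  -- put everything together
  rw [total, hsum, hCcard, hNcard]
  set K := m * n with hK
  have hKZ : (K : ℤ) = (m : ℤ) * n := by push_cast [hK]; ring
  have hc' : ((K - (m + n - 1) : ℕ) : ℤ) = (K : ℤ) - m - n + 1 := by omega
  have hd' : ((q - 1 - (K - (m + n - 1)) : ℕ) : ℤ)
      = (q : ℤ) - 1 - ((K : ℤ) - m - n + 1) := by omega
  push_cast
  rw [hc', hd', ← hKZ]
  ring
end

section
/- Let Γ be a finitely presented group and r ≥ 1. Every AGL_r(ℂ)-invariant regular function f on the representation variety Hom(Γ, AGL_r(ℂ)) satisfies f(ρ) = f(ρ₀), where ρ₀ is the composition of ρ with the projection AGL_r(ℂ) → GL_r(ℂ) (the vectorial part, included back into AGL_r(ℂ) with zero translation part). Consequently, restriction gives an isomorphism between the AGL_r(ℂ)-invariant functions on Hom(Γ, AGL_r(ℂ)) and the GL_r(ℂ)-invariant functions on Hom(Γ, GL_r(ℂ)). -/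
/-- The inclusion of linear automorphisms into affine automorphisms, as a group
homomorphism (vectorial part with zero translation). -/
noncomputable def linToAff (r : ℕ) :
    ((Fin r → ℂ) ≃ₗ[ℂ] (Fin r → ℂ)) →* ((Fin r → ℂ) ≃ᵃ[ℂ] (Fin r → ℂ)) where
  toFun e := e.toAffineEquiv
  map_one' := by ext x; rfl
  map_mul' := by intro e f; ext x; rfl

/-- `f` is a regular function on the `AGL_r(ℂ)`-representation variety: it is a
polynomial in the matrix entries of the linear parts and in the translation parts
of the images of finitely many group elements. -/
def RegAff (r : ℕ) (Γ : Type) [Group Γ]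
    (f : (Γ →* ((Fin r → ℂ) ≃ᵃ[ℂ] (Fin r → ℂ))) → ℂ) : Prop :=
  ∃ (k : ℕ) (γs : Fin k → Γ)
    (p : MvPolynomial (Fin k × ((Fin r × Fin r) ⊕ Fin r)) ℂ),
    ∀ ρ, f ρ = MvPolynomial.eval (fun v => Sum.elim
      (fun ij => LinearMap.toMatrix'
        (((ρ (γs v.1)).linear : (Fin r → ℂ) ≃ₗ[ℂ] (Fin r → ℂ)) :
          (Fin r → ℂ) →ₗ[ℂ] (Fin r → ℂ)) ij.1 ij.2)
      (fun j => (ρ (γs v.1)) 0 j) v.2) p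

/-- `f` is invariant under the conjugation action of `AGL_r(ℂ)`. -/
def InvAff (r : ℕ) (Γ : Type) [Group Γ]
    (f : (Γ →* ((Fin r → ℂ) ≃ᵃ[ℂ] (Fin r → ℂ))) → ℂ) : Prop :=
  ∀ (g : (Fin r → ℂ) ≃ᵃ[ℂ] (Fin r → ℂ)) ρ,
    f ((MulAut.conj g).toMonoidHom.comp ρ) = f ρ

/-- `g` is a regular function on the `GL_r(ℂ)`-representation variety. -/
def RegLin (r : ℕ) (Γ : Type) [Group Γ]
    (g : (Γ →* ((Fin r → ℂ) ≃ₗ[ℂ] (Fin r → ℂ))) → ℂ) : Prop :=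
  ∃ (k : ℕ) (γs : Fin k → Γ) (p : MvPolynomial (Fin k × (Fin r × Fin r)) ℂ),
    ∀ σ, g σ = MvPolynomial.eval (fun v => LinearMap.toMatrix'
      ((σ (γs v.1) : (Fin r → ℂ) ≃ₗ[ℂ] (Fin r → ℂ)) :
        (Fin r → ℂ) →ₗ[ℂ] (Fin r → ℂ)) v.2.1 v.2.2) p

/-- `g` is invariant under the conjugation action of `GL_r(ℂ)`. -/
def InvLin (r : ℕ) (Γ : Type) [Group Γ]
    (g : (Γ →* ((Fin r → ℂ) ≃ₗ[ℂ] (Fin r → ℂ))) → ℂ) : Prop :=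
  ∀ (h : (Fin r → ℂ) ≃ₗ[ℂ] (Fin r → ℂ)) σ,
    g ((MulAut.conj h).toMonoidHom.comp σ) = g σ

/-- Restriction of a function on the `AGL_r`-representation variety to the
`GL_r`-representation variety. -/
noncomputable def res (r : ℕ) (Γ : Type) [Group Γ]
    (f : (Γ →* ((Fin r → ℂ) ≃ᵃ[ℂ] (Fin r → ℂ))) → ℂ) :
    (Γ →* ((Fin r → ℂ) ≃ₗ[ℂ] (Fin r → ℂ))) → ℂ :=
  fun σ => f ((linToAff r).comp σ)

section Aux

private lemma eval_aeval_poly' {σ : Type*} (g : σ → Polynomial ℂ) (p : MvPolynomial σ ℂ)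
    (a : ℂ) :
    Polynomial.eval a (MvPolynomial.aeval g p)
      = MvPolynomial.eval (fun v => Polynomial.eval a (g v)) p := by
  induction p using MvPolynomial.induction_on with
  | C c => simp
  | add p q hp hq => simp [hp, hq]
  | mul_X p n h => simp [h]

private lemma eval_aeval_mv' {σ τ : Type*} (g : σ → MvPolynomial τ ℂ) (p : MvPolynomial σ ℂ)
    (w : τ → ℂ) :
    MvPolynomial.eval w (MvPolynomial.aeval g p)
      = MvPolynomial.eval (fun v => MvPolynomial.eval w (g v)) p := by
  induction p using MvPolynomial.induction_on with
  | C c => simp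
  | add a b ha hb => rw [map_add, map_add, map_add, ha, hb]
  | mul_X a n h => rw [map_mul, map_mul, map_mul, h, MvPolynomial.aeval_X, MvPolynomial.eval_X]

private lemma conj_scal_linear (r : ℕ) (l : ℂ) (hl : l ≠ 0)
    (e : (Fin r → ℂ) ≃ᵃ[ℂ] (Fin r → ℂ)) :
    ((MulAut.conj (LinearEquiv.smulOfNeZero ℂ (Fin r → ℂ) l hl).toAffineEquiv) e).linear
      = e.linear := by
  rw [MulAut.conj_apply]
  have hm : ∀ a b : (Fin r → ℂ) ≃ᵃ[ℂ] (Fin r → ℂ), (a*b).linear = a.linear * b.linear :=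
    fun a b => (AffineEquiv.linearHom).map_mul a b
  have hi : ∀ a : (Fin r → ℂ) ≃ᵃ[ℂ] (Fin r → ℂ), (a⁻¹).linear = (a.linear)⁻¹ :=
    fun a => (AffineEquiv.linearHom).map_inv a
  rw [hm, hm, hi]
  ext x
  have h1 : ((LinearEquiv.smulOfNeZero ℂ (Fin r → ℂ) l hl).toAffineEquiv.linear)⁻¹ x
      = l⁻¹ • x := by
    rw [show ∀ a : (Fin r → ℂ) ≃ₗ[ℂ] (Fin r → ℂ), a⁻¹ = a.symm from fun _ => rfl]
    apply (LinearEquiv.symm_apply_eq _).2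
    show x = l • l⁻¹ • x
    rw [smul_smul, mul_inv_cancel₀ hl, one_smul]
  show ((LinearEquiv.smulOfNeZero ℂ (Fin r → ℂ) l hl).toAffineEquiv.linear)
      (e.linear (((LinearEquiv.smulOfNeZero ℂ (Fin r → ℂ) l hl).toAffineEquiv.linear)⁻¹ x)) _
      = _
  rw [h1]
  show (l • (e.linear (l⁻¹ • x))) _ = _
  rw [map_smul, smul_smul, mul_inv_cancel₀ hl, one_smul]

private lemma conj_scal_zero (r : ℕ) (l : ℂ) (hl : l ≠ 0)
    (e : (Fin r → ℂ) ≃ᵃ[ℂ] (Fin r → ℂ)) :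
    ((MulAut.conj (LinearEquiv.smulOfNeZero ℂ (Fin r → ℂ) l hl).toAffineEquiv) e) 0
      = l • (e 0) := by
  set g := (LinearEquiv.smulOfNeZero ℂ (Fin r → ℂ) l hl).toAffineEquiv with hg
  rw [MulAut.conj_apply]
  simp only [AffineEquiv.mul_def, AffineEquiv.trans_apply]
  have hz : g⁻¹ 0 = 0 := by
    have h0 : g 0 = 0 := by show l • (0 : Fin r → ℂ) = 0; simp
    calc g⁻¹ 0 = g⁻¹ (g 0) := by rw [h0]
    _ = 0 := by
        rw [show g⁻¹ = g.symm from rfl]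
        exact g.symm_apply_apply 0
  rw [hz]
  rfl

private lemma main_step (r : ℕ) (Γ : Type) [Group Γ]
    (f : (Γ →* ((Fin r → ℂ) ≃ᵃ[ℂ] (Fin r → ℂ))) → ℂ)
    (hreg : RegAff r Γ f) (hinv : InvAff r Γ f)
    (ρ ρ₀ : Γ →* ((Fin r → ℂ) ≃ᵃ[ℂ] (Fin r → ℂ)))
    (h0 : ∀ γ, ρ₀ γ = ((ρ γ).linear).toAffineEquiv) : f ρ = f ρ₀ := by
  obtain ⟨k, γs, p, hp⟩ := hreg
  set ent : Fin k → Fin r × Fin r → ℂ := fun i ij =>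
    LinearMap.toMatrix'
      (((ρ (γs i)).linear : (Fin r → ℂ) ≃ₗ[ℂ] (Fin r → ℂ)) :
        (Fin r → ℂ) →ₗ[ℂ] (Fin r → ℂ)) ij.1 ij.2 with hent
  set b : Fin k → Fin r → ℂ := fun i => (ρ (γs i)) 0 with hb
  set F : Polynomial ℂ := MvPolynomial.aeval
    (fun v : Fin k × ((Fin r × Fin r) ⊕ Fin r) => Sum.elim
      (fun ij => Polynomial.C (ent v.1 ij))
      (fun j => Polynomial.C (b v.1 j) * Polynomial.X) v.2) p with hF
  have hFeval : ∀ l : ℂ, F.eval l = MvPolynomial.eval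
      (fun v : Fin k × ((Fin r × Fin r) ⊕ Fin r) => Sum.elim
        (fun ij => ent v.1 ij) (fun j => b v.1 j * l) v.2) p := by
    intro l
    rw [hF, eval_aeval_poly']
    refine congrArg (fun w => MvPolynomial.eval w p) ?_
    funext v
    rcases v with ⟨i, s | s⟩ <;> simp
  have hne : ∀ l : ℂ, l ≠ 0 → F.eval l = f ρ := by
    intro l hl
    set g := (LinearEquiv.smulOfNeZero ℂ (Fin r → ℂ) l hl).toAffineEquiv with hg
    have h1 : f ((MulAut.conj g).toMonoidHom.comp ρ) = f ρ := hinv g ρ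
    rw [← h1, hp, hFeval]
    refine congrArg (fun w => MvPolynomial.eval w p) ?_
    funext v
    rcases v with ⟨i, s | s⟩
    · simp only [Sum.elim_inl]
      have h2 : (((MulAut.conj g).toMonoidHom.comp ρ) (γs i)).linear = (ρ (γs i)).linear :=
        conj_scal_linear r l hl (ρ (γs i))
      show ent i s = _
      rw [hent, h2]
    · simp only [Sum.elim_inr]
      have h2 : (((MulAut.conj g).toMonoidHom.comp ρ) (γs i)) 0 = l • ((ρ (γs i)) 0) :=
        conj_scal_zero r l hl (ρ (γs i))
      rw [h2]
      show b i s * l = l * b i s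
      ring
  have hconst : F = Polynomial.C (f ρ) := by
    apply Polynomial.eq_of_infinite_eval_eq
    apply Set.Infinite.mono (s := {x : ℂ | x ≠ 0})
    · intro x hx
      simp only [Set.mem_setOf_eq, Polynomial.eval_C]
      exact hne x hx
    · exact Set.Finite.infinite_compl (Set.finite_singleton 0)
  have h00 : F.eval 0 = f ρ := by rw [hconst, Polynomial.eval_C]
  rw [← h00, hFeval, hp ρ₀]
  refine congrArg (fun w => MvPolynomial.eval w p) ?_
  funext v
  rcases v with ⟨i, s | s⟩
  · simp only [Sum.elim_inl]
    have h2 : (ρ₀ (γs i)).linear = (ρ (γs i)).linear := by rw [h0]; rfl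
    rw [hent, h2]
  · simp only [Sum.elim_inr, mul_zero]
    have h2 : (ρ₀ (γs i)) 0 = 0 := by
      rw [h0]
      show (ρ (γs i)).linear (0 : Fin r → ℂ) = 0
      exact map_zero _
    rw [h2]
    rfl

end Aux

theorem agl_invariant_functions (r : ℕ) (hr : 1 ≤ r) (Γ : Type) [Group Γ]
    (hΓ : Group.FG Γ) :
    (∀ f, RegAff r Γ f → InvAff r Γ f →
      ∀ ρ ρ₀ : Γ →* ((Fin r → ℂ) ≃ᵃ[ℂ] (Fin r → ℂ)),
        (∀ γ, ρ₀ γ = ((ρ γ).linear).toAffineEquiv) → f ρ = f ρ₀) ∧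
    (∀ f, RegAff r Γ f → InvAff r Γ f →
      RegLin r Γ (res r Γ f) ∧ InvLin r Γ (res r Γ f)) ∧
    (∀ g, RegLin r Γ g → InvLin r Γ g →
      ∃! f, (RegAff r Γ f ∧ InvAff r Γ f) ∧ res r Γ f = g) := by
  refine ⟨fun f hreg hinv ρ ρ₀ h0 => main_step r Γ f hreg hinv ρ ρ₀ h0, ?_, ?_⟩
  · -- part 2
    intro f hreg hinv
    constructor
    · -- RegLin (res f)
      obtain ⟨k, γs, p, hp⟩ := hreg
      refine ⟨k, γs, MvPolynomial.aeval (fun v : Fin k × ((Fin r × Fin r) ⊕ Fin r) =>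
        Sum.elim (fun ij => MvPolynomial.X ((v.1, ij) : Fin k × (Fin r × Fin r)))
          (fun _ => 0) v.2) p, ?_⟩
      intro σ
      rw [show res r Γ f σ = f ((linToAff r).comp σ) from rfl, hp, eval_aeval_mv']
      refine congrArg (fun w => MvPolynomial.eval w p) ?_
      funext v
      rcases v with ⟨i, s | s⟩
      · simp only [Sum.elim_inl, MvPolynomial.eval_X]
        rfl
      · simp only [Sum.elim_inr, map_zero]
        show (((linToAff r).comp σ) (γs i)) 0 s = 0
        have h2 : (((linToAff r).comp σ) (γs i)) (0 : Fin r → ℂ) = 0 := map_zero (σ (γs i))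
        rw [h2]
        rfl
    · -- InvLin (res f)
      intro h σ
      have hc : (linToAff r).comp ((MulAut.conj h).toMonoidHom.comp σ)
          = (MulAut.conj (linToAff r h)).toMonoidHom.comp ((linToAff r).comp σ) := by
        refine MonoidHom.ext fun γ => ?_
        show linToAff r (h * σ γ * h⁻¹) = linToAff r h * linToAff r (σ γ) * (linToAff r h)⁻¹
        rw [map_mul, map_mul, map_inv]
      show f ((linToAff r).comp ((MulAut.conj h).toMonoidHom.comp σ))
          = f ((linToAff r).comp σ)
      rw [hc]
      exact hinv (linToAff r h) ((linToAff r).comp σ)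
  · -- part 3
    intro g hreg hinv
    set L : ((Fin r → ℂ) ≃ᵃ[ℂ] (Fin r → ℂ)) →* ((Fin r → ℂ) ≃ₗ[ℂ] (Fin r → ℂ)) :=
      AffineEquiv.linearHom with hL
    set f : (Γ →* ((Fin r → ℂ) ≃ᵃ[ℂ] (Fin r → ℂ))) → ℂ := fun ρ => g (L.comp ρ) with hf
    have hfreg : RegAff r Γ f := by
      obtain ⟨k, γs, q, hq⟩ := hreg
      refine ⟨k, γs, MvPolynomial.rename
        (fun v : Fin k × (Fin r × Fin r) => ((v.1, Sum.inl v.2) :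
          Fin k × ((Fin r × Fin r) ⊕ Fin r))) q, ?_⟩
      intro ρ
      show g (L.comp ρ) = _
      rw [hq (L.comp ρ), MvPolynomial.eval_rename]
      rfl
    have hfinv : InvAff r Γ f := by
      intro a ρ
      have hc : L.comp ((MulAut.conj a).toMonoidHom.comp ρ)
          = (MulAut.conj (L a)).toMonoidHom.comp (L.comp ρ) := by
        refine MonoidHom.ext fun γ => ?_
        show L (a * ρ γ * a⁻¹) = L a * L (ρ γ) * (L a)⁻¹
        rw [map_mul, map_mul, map_inv]
      show g (L.comp ((MulAut.conj a).toMonoidHom.comp ρ)) = g (L.comp ρ)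
      rw [hc]
      exact hinv (L a) (L.comp ρ)
    have hres : res r Γ f = g := by
      funext σ
      show g (L.comp ((linToAff r).comp σ)) = g σ
      have h2 : L.comp ((linToAff r).comp σ) = σ := MonoidHom.ext fun γ => rfl
      rw [h2]
    refine ⟨f, ⟨⟨hfreg, hfinv⟩, hres⟩, ?_⟩
    rintro f' ⟨⟨hf'reg, hf'inv⟩, hres'⟩
    funext ρ
    set ρ₀ : Γ →* ((Fin r → ℂ) ≃ᵃ[ℂ] (Fin r → ℂ)) := (linToAff r).comp (L.comp ρ) with hρ₀
    have h0 : ∀ γ, ρ₀ γ = ((ρ γ).linear).toAffineEquiv := fun γ => rfl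
    have e1 : f' ρ = f' ρ₀ := main_step r Γ f' hf'reg hf'inv ρ ρ₀ h0
    have e2 : f ρ = f ρ₀ := main_step r Γ f hfreg hfinv ρ ρ₀ h0
    have e3 : f' ρ₀ = g (L.comp ρ) := by
      rw [← hres']
      rfl
    have e4 : f ρ₀ = g (L.comp ρ) := by
      rw [← hres]
      rfl
    rw [e1, e2, e3, e4]
end
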